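/- Let W : ℝ^m × ℝ^m → ℝ be lower semicontinuous and coercive (W(ξ,ζ) → ∞ as |(ξ,ζ)| → ∞), and define Ŵ(ξ,ζ) = inf{c ∈ ℝ : (ξ,ζ) ∈ widehat(L_c(W))}, where L_c(W) = {W ≤ c} and F̂ = {(α,β) ∈ F : (α,α),(β,α),(β,β) ∈ F}. Then for every c ∈ ℝ, L_c(Ŵ) = widehat(L_c(W)); in particular Ŵ is lower semicontinuous, coercive, symmetric (Ŵ(ξ,ζ) = Ŵ(ζ,ξ)), and Ŵ ≥ W. -/
import Mathlib


open Set

/-- Separate convexity (with vectorial components) of a subset of a product space. -/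
def SepConvex {α : Type*} [AddCommGroup α] [Module ℝ α] (E : Set (α × α)) : Prop :=
  ∀ p ∈ E, ∀ q ∈ E, ∀ t : ℝ, t ∈ Set.Icc (0:ℝ) 1 → (p.1 = q.1 ∨ p.2 = q.2) →
    t • p + (1 - t) • q ∈ E

/-- The separately convex hull: smallest separately convex superset. -/
def sepConvexHull {α : Type*} [AddCommGroup α] [Module ℝ α] (E : Set (α × α)) : Set (α × α) :=
  ⋂₀ {F : Set (α × α) | E ⊆ F ∧ SepConvex F}

/-- Diagonalized and symmetrized version Ê of a set E. -/
def hatSet {α : Type*} (E : Set (α × α)) : Set (α × α) :=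
  {p ∈ E | (p.1, p.1) ∈ E ∧ (p.2, p.1) ∈ E ∧ (p.2, p.2) ∈ E}

/-- `P` is a maximal Cartesian subset of `E`. -/
def IsMaxCart {α : Type*} (E P : Set (α × α)) : Prop :=
  ∃ A : Set α, P = A ×ˢ A ∧ P ⊆ E ∧ ∀ B : Set α, A ⊆ B → B ×ˢ B ⊆ E → B = A

open Filter

/-- The diagonalized and symmetrized supremand Ŵ. -/
noncomputable def What {m : ℕ} (W : (Fin m → ℝ) × (Fin m → ℝ) → ℝ)
    (p : (Fin m → ℝ) × (Fin m → ℝ)) : ℝ :=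
  sInf {c : ℝ | p ∈ hatSet {q | W q ≤ c}}

lemma What_eq {m : ℕ} (W : (Fin m → ℝ) × (Fin m → ℝ) → ℝ)
    (p : (Fin m → ℝ) × (Fin m → ℝ)) :
    What W p = max (max (W p) (W (p.1, p.1))) (max (W (p.2, p.1)) (W (p.2, p.2))) := by
  have h : {c : ℝ | p ∈ hatSet {q | W q ≤ c}} =
      Set.Ici (max (max (W p) (W (p.1, p.1))) (max (W (p.2, p.1)) (W (p.2, p.2)))) := by
    ext c
    simp only [hatSet, Set.mem_setOf_eq, Set.mem_sep_iff, Set.mem_Ici, max_le_iff]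
    tauto
  rw [What, h, csInf_Ici]

theorem What_levelSets {m : ℕ} (W : (Fin m → ℝ) × (Fin m → ℝ) → ℝ)
    (hlsc : LowerSemicontinuous W)
    (hcoer : Tendsto W (cocompact _) atTop) :
    (∀ c : ℝ, {p | What W p ≤ c} = hatSet {q | W q ≤ c}) ∧
    LowerSemicontinuous (What W) ∧
    Tendsto (What W) (cocompact _) atTop ∧
    (∀ ξ ζ : Fin m → ℝ, What W (ξ, ζ) = What W (ζ, ξ)) ∧
    (∀ p, W p ≤ What W p) := by
  have hle : ∀ p, W p ≤ What W p := by
    intro p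
    rw [What_eq]
    exact le_max_of_le_left (le_max_left _ _)
  have hlevel : ∀ c : ℝ, {p | What W p ≤ c} = hatSet {q | W q ≤ c} := by
    intro c
    ext p
    simp only [Set.mem_setOf_eq, What_eq, hatSet, Set.mem_sep_iff, max_le_iff]
    tauto
  refine ⟨hlevel, ?_, ?_, ?_, hle⟩
  · rw [lowerSemicontinuous_iff_isClosed_preimage]
    intro y
    have hcl : IsClosed {q | W q ≤ y} := lowerSemicontinuous_iff_isClosed_preimage.1 hlsc y
    have heq : What W ⁻¹' Set.Iic y = hatSet {q | W q ≤ y} := hlevel y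
    rw [heq]
    have hrw : hatSet {q | W q ≤ y} =
        {q | W q ≤ y} ∩ ((fun p : (Fin m → ℝ) × (Fin m → ℝ) => (p.1, p.1)) ⁻¹' {q | W q ≤ y}
          ∩ ((fun p : (Fin m → ℝ) × (Fin m → ℝ) => (p.2, p.1)) ⁻¹' {q | W q ≤ y}
          ∩ (fun p : (Fin m → ℝ) × (Fin m → ℝ) => (p.2, p.2)) ⁻¹' {q | W q ≤ y})) := rfl
    rw [hrw]
    exact hcl.inter ((hcl.preimage (by fun_prop)).inter
      ((hcl.preimage (by fun_prop)).inter (hcl.preimage (by fun_prop))))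
  · exact tendsto_atTop_mono hle hcoer
  · intro ξ ζ
    simp only [What_eq]
    exact max_comm _ _
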